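/- arXiv:0905.2258 — 2 statements merged into one kernel-verified Lean document; each statement's English description precedes it below -/
import Mathlib

section
/- Let M be a commutative monoid. If M is sharp (its only invertible element is the identity) and integral (cancellative), and M is finitely generated, then the set of irreducible elements of M generates M. -/
theorem aux_sum_eq_zero_of_sharp {M : Type*} [AddCommMonoid M]
    (hsharp : ∀ m : M, (∃ m', m + m' = 0) → m = 0)
    {ι : Type*} [DecidableEq ι] (t : Finset ι) (f : ι → M) (h : ∑ i ∈ t, f i = 0) :
    ∀ i ∈ t, f i = 0 := by
  induction t using Finset.induction_on with
  | empty => simp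
  | @insert x s hx ih =>
    rw [Finset.sum_insert hx] at h
    have h1 : f x = 0 := hsharp _ ⟨_, h⟩
    have h2 : ∑ i ∈ s, f i = 0 := hsharp _ ⟨_, by rwa [add_comm] at h⟩
    intro i hi
    rcases Finset.mem_insert.mp hi with rfl | hi
    · exact h1
    · exact ih h2 i hi

/-- If a finitely generated commutative monoid `M` is sharp (its only invertible
element is `0`) and integral (cancellative), then its set of irreducible elements
generates `M`. -/
theorem irreducibles_generate {M : Type*} [AddCommMonoid M]
    (hsharp : ∀ m : M, (∃ m', m + m' = 0) → m = 0)
    (hcancel : ∀ x y y' : M, x + y = x + y' → y = y')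
    (hfg : AddMonoid.FG M) :
    AddSubmonoid.closure
      {p : M | p ≠ 0 ∧ ∀ a b : M, p = a + b → a = 0 ∨ b = 0} = ⊤ := by
  classical
  obtain ⟨S0, hS0⟩ := hfg.fg_top
  set S : Finset M := S0.erase 0 with hSdef
  have hS : AddSubmonoid.closure (↑S : Set M) = ⊤ := by
    rw [eq_top_iff, ← hS0, AddSubmonoid.closure_le]
    intro s hs
    by_cases h0 : s = 0
    · subst h0; exact AddSubmonoid.zero_mem _
    · exact AddSubmonoid.subset_closure (Finset.mem_erase.mpr ⟨h0, hs⟩)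
  set π : ({x // x ∈ S} → ℕ) → M := fun u => ∑ s : {x // x ∈ S}, u s • (s : M) with hπdef
  have hπadd : ∀ u v, π (u + v) = π u + π v := by
    intro u v
    simp only [hπdef, Pi.add_apply, add_nsmul, Finset.sum_add_distrib]
  have hπzero : π 0 = 0 := by simp [hπdef]
  have hπsurj : ∀ m : M, ∃ u, π u = m := by
    intro m
    have hm : m ∈ AddSubmonoid.closure (↑S : Set M) := hS ▸ AddSubmonoid.mem_top m
    induction hm using AddSubmonoid.closure_induction with
    | mem s hs =>
      refine ⟨fun t => if t = ⟨s, hs⟩ then 1 else 0, ?_⟩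
      simp [hπdef, ite_smul]
    | zero => exact ⟨0, hπzero⟩
    | add x y _ _ hx hy =>
      obtain ⟨u, hu⟩ := hx
      obtain ⟨v, hv⟩ := hy
      exact ⟨u + v, by rw [hπadd, hu, hv]⟩
  have hsum0 : ∀ u, π u = 0 → u = 0 := by
    intro u hu
    funext s
    show u s = 0
    have h2 : u s • (s : M) = 0 := aux_sum_eq_zero_of_sharp hsharp Finset.univ
      (fun s => u s • (s : M)) hu s (Finset.mem_univ s)
    by_contra hne
    obtain ⟨k, hk⟩ := Nat.exists_eq_succ_of_ne_zero hne
    rw [hk, succ_nsmul] at h2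
    have hs0 : (s : M) = 0 := hsharp _ ⟨k • (s : M), by rw [add_comm]; exact h2⟩
    exact (Finset.mem_erase.mp s.2).1 hs0
  have hanti : ∀ u v, π u = π v → u ≤ v → u = v := by
    intro u v huv hle
    have huw : u + (v - u) = v := funext fun i => Nat.add_sub_cancel' (hle i)
    have : π u + π (v - u) = π u + 0 := by
      rw [← hπadd, huw, huv, add_zero]
    have h0 : v - u = 0 := hsum0 _ (hcancel _ _ _ this)
    rw [← huw, h0, add_zero]
  have hfib : ∀ m : M, {u | π u = m}.Finite := by
    intro m
    have hpwo : Set.IsPWO {u | π u = m} :=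
      (Set.IsPWO.pi (s := fun _ => Set.univ) fun _ => (Set.isWF_univ_iff.2 inferInstance).isPWO).mono (by simp)
    refine IsAntichain.finite_of_partiallyWellOrderedOn ?_ hpwo
    intro u hu v hv hne hle
    exact hne (hanti u v (hu.trans hv.symm) hle)
  have hD : ∀ m : M, {x : M | ∃ y, x + y = m}.Finite := by
    intro m
    have : {x : M | ∃ y, x + y = m} ⊆ π '' (⋃ w ∈ {u | π u = m}, Set.Iic w) := by
      rintro x ⟨y, rfl⟩
      obtain ⟨u, rfl⟩ := hπsurj x
      obtain ⟨v, rfl⟩ := hπsurj y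
      have hm' : u + v ∈ {w | π w = π u + π v} := by
        rw [Set.mem_setOf_eq, hπadd]
      exact ⟨u, Set.mem_biUnion hm'
        (Set.mem_Iic.mpr (Pi.le_def.mpr fun i => Nat.le_add_right _ _)), rfl⟩
    exact (((hfib m).biUnion fun w _ => Set.finite_Iic w).image π).subset this
  have key : ∀ n (m : M), {x : M | ∃ y, x + y = m}.ncard = n →
      m ∈ AddSubmonoid.closure {p : M | p ≠ 0 ∧ ∀ a b : M, p = a + b → a = 0 ∨ b = 0} := by
    intro n
    induction n using Nat.strong_induction_on with
    | _ n ih =>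
      intro m hm
      by_cases hm0 : m = 0
      · subst hm0; exact AddSubmonoid.zero_mem _
      by_cases hirr : ∀ a b : M, m = a + b → a = 0 ∨ b = 0
      · exact AddSubmonoid.subset_closure ⟨hm0, hirr⟩
      push_neg at hirr
      obtain ⟨a, b, hab, ha, hb⟩ := hirr
      have hslt : ∀ c d : M, m = c + d → d ≠ 0 →
          {x : M | ∃ y, x + y = c} ⊂ {x : M | ∃ y, x + y = m} := by
        intro c d hcd hd
        constructor
        · rintro x ⟨y, rfl⟩
          exact ⟨y + d, by rw [← add_assoc, ← hcd]⟩
        · intro hsub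
          obtain ⟨y, hy⟩ := hsub ⟨(0 : M), add_zero m⟩
          have : m + 0 = m + (y + d) := by
            rw [add_zero, ← add_assoc, hy, ← hcd]
          have h0 : (0 : M) = y + d := hcancel _ _ _ this
          exact hd (hsharp d ⟨y, by rw [add_comm, ← h0]⟩)
      have hlta : {x : M | ∃ y, x + y = a}.ncard < n := by
        rw [← hm]; exact Set.ncard_lt_ncard (hslt a b hab hb) (hD m)
      have hltb : {x : M | ∃ y, x + y = b}.ncard < n := by
        rw [← hm]
        exact Set.ncard_lt_ncard (hslt b a (by rw [hab, add_comm]) ha) (hD m)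
      rw [hab]
      exact AddSubmonoid.add_mem _ (ih _ hlta a rfl) (ih _ hltb b rfl)
  rw [eq_top_iff]
  intro m _
  exact key _ m rfl
end

section
/- Let A be a commutative ring and let M = A* ⊕ ℕ^r with the monoid structure where A* is the unit group of A (written multiplicatively, the sum being the product of units). Fix t_1,...,t_r ∈ A and define α: M → (A, ·) by α(u, (n_1,...,n_r)) = u · t_1^{n_1} ⋯ t_r^{n_r}. Then the automorphisms of M commuting with α and inducing the identity on M/A* are in bijection with r-tuples of units (ζ_1,...,ζ_r) ∈ (A*)^r satisfying ζ_i·t_i = t_i for all i; the automorphism corresponding to (ζ_i) sends the i-th generator e_i to ζ_i·e_i and is the identity on A*. -/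
private lemma prod_pow_single' {N : Type*} [CommMonoid N] {r : ℕ} (x : Fin r → N)
    (i : Fin r) (k : ℕ) : ∏ j, x j ^ ((Pi.single i k : Fin r → ℕ) j) = x i ^ k := by
  rw [Fintype.prod_eq_single i]
  · simp
  · intro j hj; simp [Pi.single_apply, hj]

private lemma hom_eq_prod' {N : Type*} [CommMonoid N]
    {r : ℕ} (g : Multiplicative (Fin r → ℕ) →* N) (n : Multiplicative (Fin r → ℕ)) :
    g n = ∏ i, g (Multiplicative.ofAdd (Pi.single i 1)) ^ (Multiplicative.toAdd n i) := by
  have hn : n = ∏ i, (Multiplicative.ofAdd (Pi.single i 1)) ^ (Multiplicative.toAdd n i) := by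
    rw [← ofAdd_toAdd n, ← Finset.univ_sum_single (Multiplicative.toAdd n)]
    rw [ofAdd_sum]
    congr 1; ext i
    rw [← ofAdd_nsmul]
    congr 1
    simp [Pi.single_apply]
  conv_lhs => rw [hn]
  rw [map_prod]
  simp [map_pow]

/-- Automorphisms of the log structure `M = A* ⊕ ℕ^r` (with structure map
`α(u, n) = u · ∏ tᵢ^{nᵢ}`) commuting with `α` and inducing the identity on
`M/A*` are in bijection with tuples of units `(ζ₁,...,ζ_r)` with `ζᵢ·tᵢ = tᵢ`;
the automorphism corresponding to `(ζᵢ)` sends `eᵢ` to `ζᵢ·eᵢ` and is the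
identity on `A*`. -/
theorem log_structure_automorphisms {A : Type*} [CommRing A] (r : ℕ)
    (t : Fin r → A) :
    (∀ φ : (Aˣ × Multiplicative (Fin r → ℕ)) ≃* (Aˣ × Multiplicative (Fin r → ℕ)),
      (∀ p, ((φ p).1 : A) * ∏ i, t i ^ (Multiplicative.toAdd (φ p).2 i)
          = (p.1 : A) * ∏ i, t i ^ (Multiplicative.toAdd p.2 i)) →
      (∀ p, (φ p).2 = p.2) →
      ∃! ζ : Fin r → Aˣ, (∀ i, (ζ i : A) * t i = t i) ∧
        ∀ p, φ p = (p.1 * ∏ i, ζ i ^ (Multiplicative.toAdd p.2 i), p.2)) ∧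
    (∀ ζ : Fin r → Aˣ, (∀ i, (ζ i : A) * t i = t i) →
      ∃ φ : (Aˣ × Multiplicative (Fin r → ℕ)) ≃* (Aˣ × Multiplicative (Fin r → ℕ)),
        (∀ p, ((φ p).1 : A) * ∏ i, t i ^ (Multiplicative.toAdd (φ p).2 i)
            = (p.1 : A) * ∏ i, t i ^ (Multiplicative.toAdd p.2 i)) ∧
        (∀ p, (φ p).2 = p.2) ∧
        ∀ p, φ p = (p.1 * ∏ i, ζ i ^ (Multiplicative.toAdd p.2 i), p.2)) := by
  constructor
  · intro φ hα hsnd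
    set e : Fin r → Multiplicative (Fin r → ℕ) :=
      fun i => Multiplicative.ofAdd (Pi.single i 1) with he
    set ζ : Fin r → Aˣ := fun i => (φ (1, e i)).1 with hζdef
    have key : ∀ p, φ p = (p.1 * ∏ i, ζ i ^ (Multiplicative.toAdd p.2 i), p.2) := by
      set F : (Aˣ × Multiplicative (Fin r → ℕ)) →* Aˣ :=
        (MonoidHom.fst _ _).comp φ.toMonoidHom with hF
      have hFψ : ∀ p, φ p = (F p, p.2) := by
        intro p
        exact Prod.ext rfl (hsnd p)
      have hFu : ∀ u : Aˣ, F (u, 1) = u := by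
        intro u
        have := hα (u, 1)
        have h2 := hsnd (u, 1)
        apply Units.ext
        simpa [h2, hF] using this
      intro p
      have hdecomp : p = (p.1, 1) * (1, p.2) := by
        ext <;> simp
      rw [hFψ p]
      have : F p = p.1 * ∏ i, ζ i ^ (Multiplicative.toAdd p.2 i) := by
        conv_lhs => rw [hdecomp]
        rw [map_mul, hFu]
        congr 1
        have := hom_eq_prod' (F.comp (MonoidHom.inr Aˣ (Multiplicative (Fin r → ℕ)))) p.2
        simpa [hζdef, hFψ, he] using this
      rw [this]
    refine ⟨ζ, ⟨?_, key⟩, ?_⟩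
    · intro i
      have := hα (1, e i)
      have h2 := hsnd (1, e i)
      have hprod : ∏ j, t j ^ (Multiplicative.toAdd (e i) j) = t i := by
        simpa [he] using prod_pow_single' t i 1
      rw [h2, hprod] at this
      simpa using this
    · intro ζ' ⟨_, hζ'⟩
      funext i
      have h1 := hζ' (1, e i)
      have h2 := key (1, e i)
      rw [h1] at h2
      have := congrArg Prod.fst h2
      simp only at this
      have hp1 : ∏ j, ζ' j ^ (Multiplicative.toAdd (e i) j) = ζ' i := by
        simpa [he] using prod_pow_single' ζ' i 1
      have hp2 : ∏ j, ζ j ^ (Multiplicative.toAdd (e i) j) = ζ i := by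
        simpa [he] using prod_pow_single' ζ i 1
      rw [hp1, hp2] at this
      simpa using this
  · intro ζ hζ
    refine ⟨{
      toFun := fun p => (p.1 * ∏ i, ζ i ^ (Multiplicative.toAdd p.2 i), p.2)
      invFun := fun p => (p.1 * (∏ i, ζ i ^ (Multiplicative.toAdd p.2 i))⁻¹, p.2)
      left_inv := by intro p; ext <;> simp [mul_assoc]
      right_inv := by intro p; ext <;> simp [mul_assoc]
      map_mul' := by
        intro p q
        ext
        · simp [pow_add, Finset.prod_mul_distrib, mul_mul_mul_comm]
        · simp
    }, ?_, fun p => rfl, fun p => rfl⟩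
    intro p
    simp only [MulEquiv.coe_mk, Equiv.coe_fn_mk]
    push_cast
    rw [mul_assoc, ← Finset.prod_mul_distrib]
    congr 1
    refine Finset.prod_congr rfl fun i _ => ?_
    rw [← mul_pow, hζ i]
end
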